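/- Let U ≥ 1 users have channel gains H_1 ≥ H_2 ≥ … ≥ H_U > 0, let b > 0 be a common per-user bandwidth, let ρ ≥ 0 and r ≥ ρ be rates, let P > 0 be the total power budget, and let N₀ > 0, γ ∈ (0,1]. Define the minimal power m(H, s) = N₀·b·(2^{s/b} − 1)/(γ·H), and call a subset S ⊆ {1, …, U} feasible if ∑_{k∈S} m(H_k, r) + ∑_{k∉S} m(H_k, ρ) ≤ P. Then for every feasible subset S, the prefix {1, …, |S|} (the |S| users of highest channel gain) is also feasible. Consequently, the maximum cardinality of a feasible subset is attained by a prefix of the users ordered by decreasing channel gain. -/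

import Mathlib

/-- The minimal transmit power for a user with channel gain `H` and bandwidth `b`
to achieve rate `s`: `m(H, s) = N₀·b·(2^{s/b} − 1)/(γ·H)`. -/
noncomputable def minPower (N0 γ b H s : ℝ) : ℝ :=
  N0 * b * ((2 : ℝ) ^ (s / b) - 1) / (γ * H)

private lemma strictMono_val_le {n U : ℕ} (f : Fin n ↪o Fin U) :
    ∀ (k : ℕ) (h : k < n), k ≤ ((f ⟨k, h⟩ : Fin U) : ℕ) := by
  intro k
  induction k with
  | zero => intro h; exact Nat.zero_le _
  | succ k ih =>
    intro h
    have hk : k < n := Nat.lt_of_succ_lt h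
    have h1 : (f ⟨k, hk⟩ : Fin U) < f ⟨k + 1, h⟩ :=
      f.strictMono (Fin.mk_lt_mk.mpr (Nat.lt_succ_self k))
    have := ih hk
    have h2 : ((f ⟨k, hk⟩ : Fin U) : ℕ) < ((f ⟨k + 1, h⟩ : Fin U) : ℕ) := h1
    omega

private lemma filter_lt_eq_map {U n : ℕ} (hn : n ≤ U) :
    Finset.univ.filter (fun u : Fin U => (u : ℕ) < n) =
      Finset.univ.map (Fin.castLEEmb hn) := by
  ext u
  simp only [Finset.mem_filter, Finset.mem_univ, true_and, Finset.mem_map]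
  constructor
  · intro hu
    exact ⟨⟨u, hu⟩, Fin.ext rfl⟩
  · rintro ⟨i, rfl⟩
    exact i.2

/-- power-allocation form of Lemma 1: with users ordered by
decreasing channel gain, for every feasible set `S` of users upgraded from rate `ρ`
to rate `r`, the prefix consisting of the `|S|` highest-gain users is also feasible;
consequently the maximum cardinality of a feasible set is attained by a prefix. -/
theorem prefix_feasible_and_optimal (U : ℕ) (hU : 1 ≤ U) (H : Fin U → ℝ)
    (hHpos : ∀ u, 0 < H u) (hHsorted : ∀ u v : Fin U, u ≤ v → H v ≤ H u)
    (b ρ r P N0 γ : ℝ) (hb : 0 < b) (hρ : 0 ≤ ρ) (hρr : ρ ≤ r) (hP : 0 < P)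
    (hN0 : 0 < N0) (hγ : γ ∈ Set.Ioc (0 : ℝ) 1) :
    (∀ S : Finset (Fin U),
      ∑ k ∈ S, minPower N0 γ b (H k) r + ∑ k ∈ Sᶜ, minPower N0 γ b (H k) ρ ≤ P →
      ∑ k ∈ Finset.univ.filter (fun u : Fin U => (u : ℕ) < S.card),
          minPower N0 γ b (H k) r +
        ∑ k ∈ Finset.univ.filter (fun u : Fin U => ¬ (u : ℕ) < S.card),
          minPower N0 γ b (H k) ρ ≤ P) ∧
    (∀ S : Finset (Fin U),
      ∑ k ∈ S, minPower N0 γ b (H k) r + ∑ k ∈ Sᶜ, minPower N0 γ b (H k) ρ ≤ P →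
      ∃ T : Finset (Fin U),
        (∑ k ∈ T, minPower N0 γ b (H k) r + ∑ k ∈ Tᶜ, minPower N0 γ b (H k) ρ ≤ P) ∧
        T = Finset.univ.filter (fun u : Fin U => (u : ℕ) < T.card) ∧
        ∀ S' : Finset (Fin U),
          (∑ k ∈ S', minPower N0 γ b (H k) r + ∑ k ∈ S'ᶜ, minPower N0 γ b (H k) ρ ≤ P) →
          S'.card ≤ T.card) := by
  classical
  obtain ⟨hγ0, hγ1⟩ := hγ
  -- upgrade cost
  set c : Fin U → ℝ := fun k =>
    N0 * b * ((2 : ℝ) ^ (r / b) - (2 : ℝ) ^ (ρ / b)) / (γ * H k) with hc_def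
  have hsplit : ∀ k, minPower N0 γ b (H k) r = minPower N0 γ b (H k) ρ + c k := by
    intro k
    simp only [minPower, hc_def]
    rw [← add_div]
    congr 1
    ring
  have hcmono : ∀ u v : Fin U, u ≤ v → c u ≤ c v := by
    intro u v huv
    have hApos : 0 ≤ N0 * b * ((2 : ℝ) ^ (r / b) - (2 : ℝ) ^ (ρ / b)) := by
      have hdiv : ρ / b ≤ r / b := by gcongr
      have h2 : (2 : ℝ) ^ (ρ / b) ≤ (2 : ℝ) ^ (r / b) :=
        Real.rpow_le_rpow_of_exponent_le one_le_two hdiv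
      exact mul_nonneg (mul_nonneg hN0.le hb.le) (sub_nonneg.mpr h2)
    have h1 : 0 < γ * H v := mul_pos hγ0 (hHpos v)
    have h2 : γ * H v ≤ γ * H u :=
      mul_le_mul_of_nonneg_left (hHsorted u v huv) hγ0.le
    exact div_le_div_of_nonneg_left hApos h1 h2
  -- total power as base + upgrade costs
  have htotal : ∀ S : Finset (Fin U),
      ∑ k ∈ S, minPower N0 γ b (H k) r + ∑ k ∈ Sᶜ, minPower N0 γ b (H k) ρ =
        ∑ k, minPower N0 γ b (H k) ρ + ∑ k ∈ S, c k := by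
    intro S
    have h1 : ∑ k ∈ S, minPower N0 γ b (H k) r =
        ∑ k ∈ S, minPower N0 γ b (H k) ρ + ∑ k ∈ S, c k := by
      rw [← Finset.sum_add_distrib]
      exact Finset.sum_congr rfl fun k _ => hsplit k
    have h2 : ∑ k ∈ S, minPower N0 γ b (H k) ρ +
        ∑ k ∈ Sᶜ, minPower N0 γ b (H k) ρ = ∑ k, minPower N0 γ b (H k) ρ :=
      Finset.sum_add_sum_compl S _
    linarith
  -- the prefix of size S.card has smaller upgrade cost
  have hkey : ∀ S : Finset (Fin U),
      ∑ k ∈ Finset.univ.filter (fun u : Fin U => (u : ℕ) < S.card), c k ≤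
        ∑ k ∈ S, c k := by
    intro S
    have hn : S.card ≤ U := by
      simpa using S.card_le_univ
    set n := S.card with hn_def
    set f : Fin n ↪o Fin U := S.orderEmbOfFin rfl with hf_def
    have hSmap : S = Finset.univ.map f.toEmbedding := by
      ext u
      simp only [Finset.mem_map, Finset.mem_univ, true_and]
      constructor
      · intro hu
        have : u ∈ Set.range f := by
          rw [Finset.range_orderEmbOfFin]; exact hu
        obtain ⟨i, hi⟩ := this
        exact ⟨i, hi⟩
      · rintro ⟨i, rfl⟩
        exact S.orderEmbOfFin_mem rfl i
    rw [filter_lt_eq_map hn, Finset.sum_map, hSmap, Finset.sum_map]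
    apply Finset.sum_le_sum
    intro i _
    apply hcmono
    have := strictMono_val_le f i.1 i.2
    simp only [Fin.eta] at this
    exact this
  -- feasibility of the prefix
  have hprefix : ∀ S : Finset (Fin U),
      ∑ k ∈ S, minPower N0 γ b (H k) r + ∑ k ∈ Sᶜ, minPower N0 γ b (H k) ρ ≤ P →
      ∑ k ∈ Finset.univ.filter (fun u : Fin U => (u : ℕ) < S.card),
          minPower N0 γ b (H k) r +
        ∑ k ∈ Finset.univ.filter (fun u : Fin U => ¬ (u : ℕ) < S.card),
          minPower N0 γ b (H k) ρ ≤ P := by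
    intro S hS
    have hcompl : Finset.univ.filter (fun u : Fin U => ¬ (u : ℕ) < S.card) =
        (Finset.univ.filter (fun u : Fin U => (u : ℕ) < S.card))ᶜ := by
      ext u; simp
    rw [hcompl, htotal]
    rw [htotal] at hS
    have := hkey S
    linarith
  refine ⟨hprefix, ?_⟩
  intro S hS
  -- pick a feasible set of maximal cardinality
  set F : Finset (Finset (Fin U)) := Finset.univ.filter (fun S' : Finset (Fin U) =>
    ∑ k ∈ S', minPower N0 γ b (H k) r + ∑ k ∈ S'ᶜ, minPower N0 γ b (H k) ρ ≤ P)
    with hF_def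
  have hSF : S ∈ F := by simp [hF_def, hS]
  obtain ⟨M, hMF, hMmax⟩ := F.exists_max_image Finset.card ⟨S, hSF⟩
  have hMfeas : ∑ k ∈ M, minPower N0 γ b (H k) r +
      ∑ k ∈ Mᶜ, minPower N0 γ b (H k) ρ ≤ P := by
    simpa [hF_def] using hMF
  set T : Finset (Fin U) :=
    Finset.univ.filter (fun u : Fin U => (u : ℕ) < M.card) with hT_def
  have hMn : M.card ≤ U := by simpa using M.card_le_univ
  have hTcard : T.card = M.card := by
    rw [hT_def, filter_lt_eq_map hMn, Finset.card_map, Finset.card_univ,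
      Fintype.card_fin]
  have hTfeas : ∑ k ∈ T, minPower N0 γ b (H k) r +
      ∑ k ∈ Tᶜ, minPower N0 γ b (H k) ρ ≤ P := by
    have := hprefix M hMfeas
    have hcompl : Finset.univ.filter (fun u : Fin U => ¬ (u : ℕ) < M.card) = Tᶜ := by
      ext u; simp [hT_def]
    rw [hcompl] at this
    exact this
  refine ⟨T, hTfeas, ?_, ?_⟩
  · rw [hTcard]
  · intro S' hS'
    have hS'F : S' ∈ F := by simp [hF_def, hS']
    rw [hTcard]
    exact hMmax S' hS'F
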